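/- For x > 0 and real numbers 0 ≤ a ≤ b, the function A(x) = ∫_a^b exp(-t - x t³) dt satisfies 27x³ A''(x) + 54x² A'(x) + (6x+1) A(x) = -[(9x²t⁴ - 3xt² - 6xt + 1) exp(-t - x t³)]_{t=a}^{t=b}. -/

import Mathlib

open MeasureTheory intervalIntegral Metric

lemma contF (c : ℝ → ℝ) (hc : Continuous c) (x : ℝ) :
    Continuous (fun t => c t * Real.exp (-t - x * t ^ 3)) := by
  continuity

lemma keyD (a b : ℝ) (c : ℝ → ℝ) (hc : Continuous c) (x₀ : ℝ) :
    HasDerivAt (fun x => ∫ t in a..b, c t * Real.exp (-t - x * t ^ 3))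
      (∫ t in a..b, (c t * (-t ^ 3)) * Real.exp (-t - x₀ * t ^ 3)) x₀ := by
  have hbc : Continuous (fun t : ℝ =>
      |c t| * |t| ^ 3 * Real.exp (|t| + (|x₀| + 1) * |t| ^ 3)) := by
    continuity
  have := (intervalIntegral.hasDerivAt_integral_of_dominated_loc_of_deriv_le
      (F := fun x t => c t * Real.exp (-t - x * t ^ 3))
      (F' := fun x t => (c t * (-t ^ 3)) * Real.exp (-t - x * t ^ 3))
      (bound := fun t => |c t| * |t| ^ 3 * Real.exp (|t| + (|x₀| + 1) * |t| ^ 3))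
      (s := ball x₀ 1) (μ := volume) (ball_mem_nhds x₀ one_pos)
      (Filter.Eventually.of_forall fun x =>
        (contF c hc x).aestronglyMeasurable)
      ((contF c hc x₀).intervalIntegrable a b)
      ((contF (fun t => c t * (-t ^ 3)) (by continuity) x₀).aestronglyMeasurable)
      ?_ (hbc.intervalIntegrable a b) ?_)
  · exact this.2
  · filter_upwards with t _ x hx
    have hxb : |x| ≤ |x₀| + 1 := by
      have := mem_ball_iff_norm.mp hx
      have : |x - x₀| < 1 := this
      calc |x| = |x₀ + (x - x₀)| := by ring_nf
        _ ≤ |x₀| + |x - x₀| := abs_add_le _ _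
        _ ≤ |x₀| + 1 := by linarith
    have key : -t - x * t ^ 3 ≤ |t| + (|x₀| + 1) * |t| ^ 3 := by
      have h1 : -t ≤ |t| := neg_le_abs t
      have h2 : -(x * t ^ 3) ≤ (|x₀| + 1) * |t| ^ 3 := by
        calc -(x * t ^ 3) ≤ |x * t ^ 3| := neg_le_abs _
          _ = |x| * |t| ^ 3 := by rw [abs_mul, abs_pow]
          _ ≤ (|x₀| + 1) * |t| ^ 3 := by
              apply mul_le_mul_of_nonneg_right hxb (by positivity)
      linarith
    calc ‖c t * (-t ^ 3) * Real.exp (-t - x * t ^ 3)‖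
        = |c t| * |t| ^ 3 * Real.exp (-t - x * t ^ 3) := by
          rw [norm_mul, norm_mul, Real.norm_eq_abs, Real.norm_eq_abs, Real.norm_eq_abs,
            abs_neg, abs_pow, Real.abs_exp]
      _ ≤ |c t| * |t| ^ 3 * Real.exp (|t| + (|x₀| + 1) * |t| ^ 3) := by
          gcongr
  · filter_upwards with t _ x _
    have h1 : HasDerivAt (fun x : ℝ => -t - x * t ^ 3) (-t ^ 3) x := by
      simpa using ((hasDerivAt_id x).mul_const (t ^ 3)).const_sub (-t)
    have h2 := (h1.exp).const_mul (c t)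
    exact h2.congr_deriv (by ring)

/-- `A(x) = ∫_a^b exp(-t - x t³) dt` -/
noncomputable def A4 (a b x : ℝ) : ℝ := ∫ t in a..b, Real.exp (-t - x * t ^ 3)

/-- `g(t,x) = (9x²t⁴ - 3xt² - 6xt + 1)·exp(-t - x t³)` -/
noncomputable def g4 (t x : ℝ) : ℝ :=
  (9 * x ^ 2 * t ^ 4 - 3 * x * t ^ 2 - 6 * x * t + 1) * Real.exp (-t - x * t ^ 3)

set_option maxHeartbeats 1000000 in
/-- For `x > 0` and `0 ≤ a ≤ b`, `A(x) = ∫_a^b exp(-t - x t³) dt` satisfies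
`27x³ A'' + 54x² A' + (6x+1) A = -[g(t,x)]_{t=a}^{t=b}`. -/
theorem stmt4 (a b x : ℝ) (ha : 0 ≤ a) (hab : a ≤ b) (hx : 0 < x) :
    27 * x ^ 3 * deriv (deriv (A4 a b)) x + 54 * x ^ 2 * deriv (A4 a b) x
      + (6 * x + 1) * A4 a b x = -(g4 b x - g4 a x) := by
  set A1 : ℝ → ℝ := fun y => ∫ t in a..b, (-t ^ 3) * Real.exp (-t - y * t ^ 3) with hA1def
  set A2 : ℝ → ℝ := fun y => ∫ t in a..b, (t ^ 6) * Real.exp (-t - y * t ^ 3) with hA2def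
  have hA : ∀ y : ℝ, HasDerivAt (A4 a b) (A1 y) y := by
    intro y
    have h := keyD a b (fun _ => 1) continuous_const y
    simp only [one_mul] at h
    exact h
  have hA1 : ∀ y : ℝ, HasDerivAt A1 (A2 y) y := by
    intro y
    have h := keyD a b (fun t => -t ^ 3) (by continuity) y
    have he : (∫ t in a..b, (-t ^ 3 * -t ^ 3) * Real.exp (-t - y * t ^ 3)) = A2 y := by
      rw [hA2def]
      apply intervalIntegral.integral_congr
      intro t _
      ring
    rw [he] at h
    exact h
  have hd1 : deriv (A4 a b) = A1 := funext fun y => (hA y).deriv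
  have hd2 : deriv (deriv (A4 a b)) x = A2 x := by rw [hd1]; exact (hA1 x).deriv
  -- integrability
  have i0 : IntervalIntegrable (fun t => Real.exp (-t - x * t ^ 3)) MeasureTheory.volume a b :=
    (by fun_prop : Continuous fun t : ℝ => Real.exp (-t - x * t ^ 3)).intervalIntegrable a b
  have i3 : IntervalIntegrable (fun t => (-t ^ 3) * Real.exp (-t - x * t ^ 3))
      MeasureTheory.volume a b :=
    (by fun_prop : Continuous fun t : ℝ => (-t ^ 3) * Real.exp (-t - x * t ^ 3)).intervalIntegrable a b
  have i6 : IntervalIntegrable (fun t => (t ^ 6) * Real.exp (-t - x * t ^ 3))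
      MeasureTheory.volume a b :=
    (by fun_prop : Continuous fun t : ℝ => (t ^ 6) * Real.exp (-t - x * t ^ 3)).intervalIntegrable a b
  -- combine
  have hcomb : (∫ t in a..b, (27 * x ^ 3 * t ^ 6 - 54 * x ^ 2 * t ^ 3 + (6 * x + 1))
        * Real.exp (-t - x * t ^ 3))
      = 27 * x ^ 3 * A2 x + 54 * x ^ 2 * A1 x + (6 * x + 1) * A4 a b x := by
    have e1 : ∀ t : ℝ, (27 * x ^ 3 * t ^ 6 - 54 * x ^ 2 * t ^ 3 + (6 * x + 1))
        * Real.exp (-t - x * t ^ 3)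
        = 27 * x ^ 3 * ((t ^ 6) * Real.exp (-t - x * t ^ 3))
          + 54 * x ^ 2 * ((-t ^ 3) * Real.exp (-t - x * t ^ 3))
          + (6 * x + 1) * Real.exp (-t - x * t ^ 3) := fun t => by ring
    simp_rw [e1]
    rw [intervalIntegral.integral_add ((i6.const_mul _).add (i3.const_mul _)) (i0.const_mul _),
      intervalIntegral.integral_add (i6.const_mul _) (i3.const_mul _),
      intervalIntegral.integral_const_mul, intervalIntegral.integral_const_mul,
      intervalIntegral.integral_const_mul]
    rfl
  -- FTC
  have hg : ∀ t : ℝ, HasDerivAt (fun s => -(g4 s x))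
      ((27 * x ^ 3 * t ^ 6 - 54 * x ^ 2 * t ^ 3 + (6 * x + 1)) * Real.exp (-t - x * t ^ 3)) t := by
    intro t
    have hp : HasDerivAt (fun s : ℝ => 9 * x ^ 2 * s ^ 4 - 3 * x * s ^ 2 - 6 * x * s + 1)
        (36 * x ^ 2 * t ^ 3 - 6 * x * t - 6 * x) t := by
      have h := ((((hasDerivAt_pow 4 t).const_mul (9 * x ^ 2)).sub
        ((hasDerivAt_pow 2 t).const_mul (3 * x))).sub
        ((hasDerivAt_id t).const_mul (6 * x))).add_const 1
      exact h.congr_deriv (by push_cast; ring)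
    have hi : HasDerivAt (fun s : ℝ => -s - x * s ^ 3) (-1 - 3 * x * t ^ 2) t := by
      have h := ((hasDerivAt_id t).neg).sub ((hasDerivAt_pow 3 t).const_mul x)
      exact h.congr_deriv (by push_cast; ring)
    have he : HasDerivAt (fun s : ℝ => Real.exp (-s - x * s ^ 3))
        (Real.exp (-t - x * t ^ 3) * (-1 - 3 * x * t ^ 2)) t := hi.exp
    have hm := (hp.mul he).neg
    have : -((36 * x ^ 2 * t ^ 3 - 6 * x * t - 6 * x) * Real.exp (-t - x * t ^ 3)
        + (9 * x ^ 2 * t ^ 4 - 3 * x * t ^ 2 - 6 * x * t + 1)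
          * (Real.exp (-t - x * t ^ 3) * (-1 - 3 * x * t ^ 2)))
        = (27 * x ^ 3 * t ^ 6 - 54 * x ^ 2 * t ^ 3 + (6 * x + 1))
          * Real.exp (-t - x * t ^ 3) := by ring
    rw [this] at hm
    exact hm
  have hic : IntervalIntegrable (fun t => (27 * x ^ 3 * t ^ 6 - 54 * x ^ 2 * t ^ 3 + (6 * x + 1))
      * Real.exp (-t - x * t ^ 3)) MeasureTheory.volume a b :=
    (by fun_prop : Continuous fun t : ℝ => (27 * x ^ 3 * t ^ 6 - 54 * x ^ 2 * t ^ 3 + (6 * x + 1))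
      * Real.exp (-t - x * t ^ 3)).intervalIntegrable a b
  have hFTC := intervalIntegral.integral_eq_sub_of_hasDerivAt (fun t _ => hg t) hic
  rw [hd2, hd1, ← hcomb, hFTC]
  ring
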